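/- Let I ⊂ S be a homogeneous Gorenstein ideal with A = S/I Artinian of socle degree ν, and f_A a Macaulay inverse system of A. Then the hypersurface defined by f_A has no points of multiplicity ≥ ℓ+1 if and only if I_{ν−ℓ} contains no nonzero (ν−ℓ)-th power of a linear form, i.e., I_{ν−ℓ} ∩ C_{ν−ℓ} = {0}, where C_m := {L^m : L ∈ S_1}. -/

import Mathlib

open MvPolynomial

/-- The iterated differential operator `∏ᵢ (∂/∂zᵢ)^(s i)` as a linear endomorphism. -/
noncomputable def diffOp {n : ℕ} (s : Fin n →₀ ℕ) :
    Module.End ℂ (MvPolynomial (Fin n) ℂ) :=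
  (List.ofFn fun i : Fin n =>
    ((pderiv i : Derivation ℂ (MvPolynomial (Fin n) ℂ) (MvPolynomial (Fin n) ℂ)).toLinearMap
      ^ (s i) : Module.End ℂ (MvPolynomial (Fin n) ℂ))).prod

/-- Polar pairing: `g ∘ F := g(∂/∂z₁,…,∂/∂zₙ) F`. -/
noncomputable def polar {n : ℕ} (g F : MvPolynomial (Fin n) ℂ) : MvPolynomial (Fin n) ℂ :=
  ∑ s ∈ g.support, (coeff s g) • diffOp s F


lemma listProd_ofFn_mul {M : Type*} [Monoid M] :
    ∀ {m : ℕ} (f g : Fin m → M), (∀ i j, Commute (f i) (g j)) →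
      (List.ofFn fun i => f i * g i).prod = (List.ofFn f).prod * (List.ofFn g).prod := by
  intro m
  induction m with
  | zero => intro f g _; simp
  | succ m ih =>
    intro f g h
    rw [List.ofFn_succ, List.ofFn_succ (f := f), List.ofFn_succ (f := g),
      List.prod_cons, List.prod_cons, List.prod_cons,
      ih (fun i => f i.succ) (fun i => g i.succ) (fun i j => h i.succ j.succ)]
    have hc : Commute (g 0) (List.ofFn fun i => f i.succ).prod := by
      apply Commute.list_prod_right
      intro x hx
      rw [List.mem_ofFn] at hx
      obtain ⟨i, rfl⟩ := hx
      exact (h i.succ 0).symm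
    rw [mul_assoc, mul_assoc, ← mul_assoc (g 0), hc.eq, mul_assoc]

lemma listProd_ofFn_eq_single {M : Type*} [Monoid M] :
    ∀ {m : ℕ} (f : Fin m → M) (i : Fin m), (∀ j, j ≠ i → f j = 1) →
      (List.ofFn f).prod = f i := by
  intro m
  induction m with
  | zero => exact fun f i => i.elim0
  | succ m ih =>
    intro f i h
    rw [List.ofFn_succ, List.prod_cons]
    induction i using Fin.cases with
    | zero =>
      have : (List.ofFn fun j : Fin m => f j.succ).prod = 1 := by
        apply List.prod_eq_one
        intro x hx
        rw [List.mem_ofFn] at hx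
        obtain ⟨j, rfl⟩ := hx
        exact h j.succ (Fin.succ_ne_zero j)
      rw [this, mul_one]
    | succ j =>
      rw [h 0 (Fin.succ_ne_zero j).symm, one_mul]
      exact ih (fun k => f k.succ) j fun k hk => h k.succ (by simpa [Fin.succ_inj] using hk)

lemma pderiv_commute {n : ℕ} (i j : Fin n) :
    Commute ((pderiv i : Derivation ℂ (MvPolynomial (Fin n) ℂ) _).toLinearMap)
      ((pderiv j : Derivation ℂ (MvPolynomial (Fin n) ℂ) _).toLinearMap) := by
  rcases eq_or_ne i j with rfl | hij
  · rfl
  · apply LinearMap.ext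
    intro F
    induction F using MvPolynomial.induction_on' with
    | monomial t a =>
      simp only [Module.End.mul_apply, pderiv_monomial]
      simp only [Derivation.coeFn_coe, pderiv_monomial]
      rw [Finsupp.tsub_apply, Finsupp.tsub_apply, Finsupp.single_apply,
        Finsupp.single_apply, if_neg hij.symm, if_neg hij]
      rw [tsub_tsub, tsub_tsub, add_comm (Finsupp.single j 1)]
      simp only [Nat.sub_zero]
      ring_nf
    | add p q hp hq =>
      simp only [Module.End.mul_apply, map_add] at hp hq ⊢
      rw [hp, hq]

lemma diffOp_add {n : ℕ} (s t : Fin n →₀ ℕ) : diffOp (s + t) = diffOp s * diffOp t := by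
  unfold diffOp
  rw [← listProd_ofFn_mul]
  · apply congrArg
    apply congrArg
    funext i
    rw [Finsupp.add_apply, pow_add]
    
  · intro i j
    exact ((pderiv_commute i j).pow_pow _ _)

lemma diffOp_zero {n : ℕ} : diffOp (0 : Fin n →₀ ℕ) = 1 := by
  unfold diffOp
  apply List.prod_eq_one
  intro x hx
  rw [List.mem_ofFn] at hx
  obtain ⟨i, rfl⟩ := hx
  simp

lemma diffOp_single {n : ℕ} (i : Fin n) (k : ℕ) :
    diffOp (Finsupp.single i k) =
      ((pderiv i : Derivation ℂ (MvPolynomial (Fin n) ℂ) _).toLinearMap ^ k) := by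
  unfold diffOp
  rw [listProd_ofFn_eq_single _ i]
  · rw [Finsupp.single_eq_same]
  · intro j hj
    rw [Finsupp.single_eq_of_ne hj, pow_zero]

lemma nat_mul_descFactorial (m k : ℕ) : m * (m - 1).descFactorial k = m.descFactorial (k + 1) := by
  cases m with
  | zero => simp
  | succ m => rw [Nat.succ_descFactorial_succ, Nat.succ_sub_one]

lemma pderiv_pow_monomial {n : ℕ} (i : Fin n) (k : ℕ) (t : Fin n →₀ ℕ) (a : ℂ) :
    ((pderiv i : Derivation ℂ (MvPolynomial (Fin n) ℂ) _).toLinearMap ^ k) (monomial t a) =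
      monomial (t - Finsupp.single i k) (a * ((t i).descFactorial k : ℂ)) := by
  induction k generalizing t a with
  | zero => simp
  | succ k ih =>
    rw [pow_succ, Module.End.mul_apply, Derivation.coeFn_coe, pderiv_monomial, ih]
    congr 1
    · rw [tsub_tsub, ← Finsupp.single_add, add_comm 1 k]
    · rw [Finsupp.tsub_apply, Finsupp.single_eq_same, mul_assoc]
      congr 1
      push_cast [← nat_mul_descFactorial (t i) k]
      ring

lemma diffOp_monomial {n : ℕ} (s t : Fin n →₀ ℕ) (a : ℂ) :
    diffOp s (monomial t a) =
      monomial (t - s) (a * ∏ i : Fin n, ((t i).descFactorial (s i) : ℂ)) := by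
  induction s using Finsupp.induction generalizing a with
  | zero => simp [diffOp_zero]
  | single_add i k s hi hk ih =>
    rw [diffOp_add, Module.End.mul_apply, ih, diffOp_single, pderiv_pow_monomial]
    have hsi : s i = 0 := Finsupp.notMem_support_iff.mp hi
    congr 1
    · rw [tsub_tsub, add_comm (Finsupp.single i k) s]
    · rw [Finsupp.tsub_apply, hsi, Nat.sub_zero]
      have h1 : ∀ j : Fin n, j ≠ i →
          ((t j).descFactorial ((Finsupp.single i k + s) j) : ℂ)
            = ((t j).descFactorial (s j) : ℂ) := by
        intro j hj
        rw [Finsupp.add_apply, Finsupp.single_eq_of_ne hj, zero_add]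
      rw [← Finset.mul_prod_erase Finset.univ _ (Finset.mem_univ i),
        ← Finset.mul_prod_erase Finset.univ
          (fun j => ((t j).descFactorial ((Finsupp.single i k + s) j) : ℂ)) (Finset.mem_univ i),
        Finsupp.add_apply, Finsupp.single_eq_same, hsi, add_zero,
        Finset.prod_congr rfl fun j hj => h1 j (Finset.ne_of_mem_erase hj)]
      rw [Nat.descFactorial_zero]
      push_cast
      ring

lemma polar_eq_sum {n : ℕ} (g F : MvPolynomial (Fin n) ℂ) (T : Finset (Fin n →₀ ℕ))
    (hT : g.support ⊆ T) : polar g F = ∑ s ∈ T, (coeff s g) • diffOp s F := by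
  unfold polar
  exact (Finset.sum_subset (f := fun s => coeff s g • diffOp s F) hT fun s _ hs => by
    show coeff s g • diffOp s F = 0
    rw [MvPolynomial.notMem_support_iff.mp hs, zero_smul])

lemma polar_add_left {n : ℕ} (g h F : MvPolynomial (Fin n) ℂ) :
    polar (g + h) F = polar g F + polar h F := by
  rw [polar_eq_sum (g + h) F (g.support ∪ h.support) MvPolynomial.support_add,
    polar_eq_sum g F (g.support ∪ h.support) Finset.subset_union_left,
    polar_eq_sum h F (g.support ∪ h.support) Finset.subset_union_right,
    ← Finset.sum_add_distrib]
  exact Finset.sum_congr rfl fun s _ => by rw [coeff_add, add_smul]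

lemma polar_zero_left {n : ℕ} (F : MvPolynomial (Fin n) ℂ) : polar 0 F = 0 := by
  simp [polar]

lemma polar_sum_left {n : ℕ} {ι : Type*} (T : Finset ι) (g : ι → MvPolynomial (Fin n) ℂ)
    (F : MvPolynomial (Fin n) ℂ) : polar (∑ j ∈ T, g j) F = ∑ j ∈ T, polar (g j) F := by
  induction T using Finset.cons_induction with
  | empty => simp [polar_zero_left]
  | cons a T ha ih => rw [Finset.sum_cons, Finset.sum_cons, polar_add_left, ih]

lemma polar_monomial {n : ℕ} (s : Fin n →₀ ℕ) (a : ℂ) (F : MvPolynomial (Fin n) ℂ) :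
    polar (monomial s a) F = a • diffOp s F := by
  rw [polar_eq_sum _ F {s} (MvPolynomial.support_monomial_subset), Finset.sum_singleton,
    coeff_monomial, if_pos rfl]

lemma polar_one {n : ℕ} (F : MvPolynomial (Fin n) ℂ) : polar 1 F = F := by
  have : (1 : MvPolynomial (Fin n) ℂ) = monomial 0 1 := by rw [monomial_zero', map_one]
  rw [this, polar_monomial, diffOp_zero, one_smul, Module.End.one_apply]

lemma polar_monomial_mul {n : ℕ} (s : Fin n →₀ ℕ) (a : ℂ) (h F : MvPolynomial (Fin n) ℂ) :
    polar (monomial s a * h) F = a • diffOp s (polar h F) := by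
  conv_lhs => rw [h.as_sum, Finset.mul_sum]
  rw [polar_sum_left]
  have step : ∀ t ∈ h.support, polar (monomial s a * monomial t (coeff t h)) F
      = a • (coeff t h • diffOp s (diffOp t F)) := by
    intro t _
    rw [monomial_mul, polar_monomial, diffOp_add, Module.End.mul_apply, smul_smul, mul_smul]
  rw [Finset.sum_congr rfl step]
  unfold polar
  rw [map_sum, Finset.smul_sum]
  exact Finset.sum_congr rfl fun t _ => by rw [map_smul]

lemma polar_mul {n : ℕ} (g h F : MvPolynomial (Fin n) ℂ) :
    polar (g * h) F = polar g (polar h F) := by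
  conv_lhs => rw [g.as_sum, Finset.sum_mul]
  rw [polar_sum_left]
  exact Finset.sum_congr rfl fun s _ => polar_monomial_mul s (coeff s g) h F

lemma degree_eq_sum_univ {n : ℕ} (d : Fin n →₀ ℕ) : d.degree = ∑ i : Fin n, d i :=
  Finset.sum_subset (Finset.subset_univ _)
    (fun i _ hi => Finsupp.notMem_support_iff.mp hi)

lemma isHom_degree {n m : ℕ} {φ : MvPolynomial (Fin n) ℂ} (hφ : φ.IsHomogeneous m)
    {d : Fin n →₀ ℕ} (h : coeff d φ ≠ 0) : d.degree = m := by
  rw [Finsupp.degree_eq_weight_one]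
  exact hφ h

lemma diffOp_isHomogeneous {n : ℕ} (s : Fin n →₀ ℕ) {F : MvPolynomial (Fin n) ℂ} {d : ℕ}
    (hF : F.IsHomogeneous d) : (diffOp s F).IsHomogeneous (d - s.degree) := by
  rw [F.as_sum, map_sum]
  apply IsHomogeneous.sum
  intro t ht
  rw [diffOp_monomial]
  by_cases hst : s ≤ t
  · apply isHomogeneous_monomial
    have ht' : t.degree = d := isHom_degree hF (mem_support_iff.mp ht)
    have hpt : ∀ i, s i ≤ t i := fun i => hst i
    have : (t - s).degree + s.degree = t.degree := by
      rw [degree_eq_sum_univ, degree_eq_sum_univ, degree_eq_sum_univ, ← Finset.sum_add_distrib]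
      exact Finset.sum_congr rfl fun i _ => by
        rw [Finsupp.tsub_apply]
        have := hpt i
        omega
    omega
  · have hex : ∃ i, t i < s i := by
      by_contra hc
      push_neg at hc
      exact hst fun i => hc i
    obtain ⟨i, hi⟩ := hex
    have hz : ((t i).descFactorial (s i) : ℂ) = 0 := by
      rw [Nat.cast_eq_zero, Nat.descFactorial_eq_zero_iff_lt]; exact hi
    rw [Finset.prod_eq_zero (Finset.mem_univ i) hz, mul_zero, map_zero]
    exact isHomogeneous_zero _ _ _

lemma polar_isHomogeneous {n : ℕ} {u F : MvPolynomial (Fin n) ℂ} {e d : ℕ}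
    (hu : u.IsHomogeneous e) (hF : F.IsHomogeneous d) :
    (polar u F).IsHomogeneous (d - e) := by
  unfold polar
  apply IsHomogeneous.sum
  intro s hs
  rw [smul_eq_C_mul]
  have : s.degree = e := isHom_degree hu (mem_support_iff.mp hs)
  exact (this ▸ diffOp_isHomogeneous s hF).C_mul _

lemma euler_monomial {n : ℕ} (t : Fin n →₀ ℕ) (a : ℂ) (c : Fin n → ℂ) :
    ∑ i : Fin n, c i * eval c (pderiv i (monomial t a)) =
      (t.degree : ℂ) * eval c (monomial t a) := by
  have hev : ∀ u : Fin n →₀ ℕ, ∀ b : ℂ, eval c (monomial u b) = b * ∏ j : Fin n, c j ^ u j := by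
    intro u b
    rw [eval_monomial]
    congr 1
    exact Finsupp.prod_fintype _ _ fun j => pow_zero (c j)
  have step : ∀ i : Fin n, c i * eval c (pderiv i (monomial t a)) =
      (t i : ℂ) * (a * ∏ j : Fin n, c j ^ t j) := by
    intro i
    rw [pderiv_monomial, hev]
    rcases Nat.eq_zero_or_pos (t i) with h0 | hpos
    · simp [h0]
    · have hprod : ∀ u : Fin n →₀ ℕ, (∏ j : Fin n, c j ^ u j)
          = c i ^ u i * ∏ j ∈ Finset.univ.erase i, c j ^ u j :=
        fun u => (Finset.mul_prod_erase Finset.univ (fun j => c j ^ u j)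
          (Finset.mem_univ i)).symm
      have h1 : ∀ j ∈ Finset.univ.erase i,
          c j ^ ((t - Finsupp.single i 1 : Fin n →₀ ℕ) j) = c j ^ t j := by
        intro j hj
        rw [Finsupp.tsub_apply, Finsupp.single_apply,
          if_neg (Finset.ne_of_mem_erase hj).symm, Nat.sub_zero]
      rw [hprod (t - Finsupp.single i 1), hprod t, Finset.prod_congr rfl h1,
        Finsupp.tsub_apply, Finsupp.single_eq_same]
      have h2 : c i * c i ^ (t i - 1) = c i ^ t i := by
        conv_rhs => rw [← Nat.succ_pred_eq_of_pos hpos]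
        rw [pow_succ', Nat.pred_eq_sub_one]
      rw [← h2]
      ring
  rw [Finset.sum_congr rfl fun i _ => step i, ← Finset.sum_mul, hev]
  rw [degree_eq_sum_univ]
  push_cast
  ring

lemma euler_eval {n m : ℕ} {F : MvPolynomial (Fin n) ℂ} (hF : F.IsHomogeneous m)
    (c : Fin n → ℂ) :
    ∑ i : Fin n, c i * eval c (pderiv i F) = (m : ℂ) * eval c F := by
  conv_lhs => rw [F.as_sum]
  conv_rhs => rw [F.as_sum]
  simp only [map_sum, Finset.mul_sum]
  rw [Finset.sum_comm]
  refine Finset.sum_congr rfl fun t ht => ?_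
  rw [show ((m:ℂ)) = ((t.degree : ℕ) : ℂ) from by
    rw [isHom_degree hF (mem_support_iff.mp ht)]]
  exact euler_monomial _ _ _

lemma polar_linear {n : ℕ} (c : Fin n → ℂ) (F : MvPolynomial (Fin n) ℂ) :
    polar (∑ i, c i • X i) F = ∑ i, c i • (pderiv i F) := by
  rw [polar_sum_left]
  refine Finset.sum_congr rfl fun i _ => ?_
  have : (c i • X i : MvPolynomial (Fin n) ℂ) = monomial (Finsupp.single i 1) (c i) := by
    rw [X, ← map_smul, smul_eq_mul, mul_one]
  rw [this, polar_monomial, diffOp_single, pow_one]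
  rfl

lemma eq_C_of_isHomogeneous_zero {n : ℕ} {F : MvPolynomial (Fin n) ℂ}
    (hF : F.IsHomogeneous 0) : F = C (coeff 0 F) := by
  ext d
  rw [coeff_C]
  rcases eq_or_ne (0 : Fin n →₀ ℕ) d with rfl | hd
  · rw [if_pos rfl]
  · rw [if_neg hd]
    refine hF.coeff_eq_zero ?_
    rw [Ne, Finsupp.degree_eq_zero_iff]
    exact fun h => hd (h ▸ rfl)

lemma isHomogeneous_linear {n : ℕ} (c : Fin n → ℂ) :
    (∑ i, c i • X i : MvPolynomial (Fin n) ℂ).IsHomogeneous 1 :=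
  IsHomogeneous.sum _ _ _ fun i _ => by
    rw [smul_eq_C_mul]; exact isHomogeneous_C_mul_X _ _

lemma polar_linear_pow {n : ℕ} (c : Fin n → ℂ) :
    ∀ (m : ℕ) (F : MvPolynomial (Fin n) ℂ), F.IsHomogeneous m →
      polar ((∑ i, c i • X i) ^ m) F = C ((m.factorial : ℂ) * eval c F) := by
  intro m
  induction m with
  | zero =>
    intro F hF
    rw [pow_zero, polar_one, eq_C_of_isHomogeneous_zero hF]
    simp
  | succ m ih =>
    intro F hF
    rw [pow_succ, polar_mul, polar_linear]
    have hpd : ∀ i : Fin n, (pderiv i F).IsHomogeneous m := by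
      intro i
      have := diffOp_isHomogeneous (Finsupp.single i 1) hF
      rw [diffOp_single, pow_one] at this
      have hd1 : (Finsupp.single i 1 : Fin n →₀ ℕ).degree = 1 := by
        rw [degree_eq_sum_univ]
        simp [Finsupp.single_apply]
      rw [hd1] at this
      have h1 : m + 1 - 1 = m := by omega
      rw [h1] at this
      exact this
    have hsum : (∑ i, c i • (pderiv i F) : MvPolynomial (Fin n) ℂ).IsHomogeneous m :=
      IsHomogeneous.sum _ _ _ fun i _ => by
        rw [smul_eq_C_mul]; exact (hpd i).C_mul _
    rw [ih _ hsum]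
    congr 1
    have hev : eval c (∑ i, c i • (pderiv i F) : MvPolynomial (Fin n) ℂ)
        = ∑ i, c i * eval c (pderiv i F) := by
      rw [map_sum]
      exact Finset.sum_congr rfl fun i _ => smul_eval _ _ _
    rw [hev, euler_eval hF c, Nat.factorial_succ]
    push_cast
    ring

lemma diffOp_eq_C_coeff {n ℓ : ℕ} {h : MvPolynomial (Fin n) ℂ} (hh : h.IsHomogeneous ℓ)
    {s : Fin n →₀ ℕ} (hs : s.degree = ℓ) :
    diffOp s h = C ((∏ i : Fin n, ((s i).factorial : ℂ)) * coeff s h) := by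
  have expand : diffOp s h =
      ∑ t ∈ h.support, monomial (t - s) (coeff t h * ∏ i : Fin n, ((t i).descFactorial (s i) : ℂ)) := by
    conv_lhs => rw [h.as_sum]
    rw [map_sum]
    exact Finset.sum_congr rfl fun t _ => diffOp_monomial s t (coeff t h)
  have key : ∀ t ∈ h.support, t ≠ s →
      monomial (t - s) (coeff t h * ∏ i : Fin n, ((t i).descFactorial (s i) : ℂ)) = 0 := by
    intro t ht hts
    have htd : t.degree = ℓ := isHom_degree hh (mem_support_iff.mp ht)
    have hex : ∃ i, t i < s i := by
      by_contra hc
      push_neg at hc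
      apply hts
      have hsum : ∑ i : Fin n, s i = ∑ i : Fin n, t i := by
        rw [← degree_eq_sum_univ, ← degree_eq_sum_univ, hs, htd]
      have heq := (Finset.sum_eq_sum_iff_of_le (fun i _ => hc i)).mp hsum
      ext i
      exact (heq i (Finset.mem_univ i)).symm
    obtain ⟨i, hi⟩ := hex
    have hz : ((t i).descFactorial (s i) : ℂ) = 0 := by
      rw [Nat.cast_eq_zero, Nat.descFactorial_eq_zero_iff_lt]; exact hi
    rw [Finset.prod_eq_zero (Finset.mem_univ i) hz, mul_zero, map_zero]
  rw [expand]
  by_cases hmem : s ∈ h.support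
  · rw [Finset.sum_eq_single_of_mem s hmem key, tsub_self, ← monomial_zero']
    congr 1
    rw [Finset.prod_congr rfl fun i (_ : i ∈ Finset.univ) => by
      rw [Nat.descFactorial_self (s i)]]
    ring
  · rw [MvPolynomial.notMem_support_iff.mp hmem, mul_zero, map_zero]
    exact Finset.sum_eq_zero fun t ht => key t ht (fun h' => hmem (h' ▸ ht))

lemma eq_zero_of_diffOp_eq_zero {n ℓ : ℕ} {h : MvPolynomial (Fin n) ℂ}
    (hh : h.IsHomogeneous ℓ)
    (hz : ∀ s : Fin n →₀ ℕ, s.degree = ℓ → diffOp s h = 0) : h = 0 := by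
  ext d
  rw [coeff_zero]
  by_cases hd : d.degree = ℓ
  · have := hz d hd
    rw [diffOp_eq_C_coeff hh hd] at this
    have h2 : (∏ i : Fin n, ((d i).factorial : ℂ)) * coeff d h = 0 :=
      MvPolynomial.C_injective (Fin n) ℂ (by rw [this, map_zero])
    rcases mul_eq_zero.mp h2 with h3 | h3
    · exfalso
      refine Finset.prod_ne_zero_iff.mpr (fun i _ => ?_) h3
      exact_mod_cast (Nat.factorial_pos (d i)).ne'
    · exact h3
  · exact hh.coeff_eq_zero hd

lemma linear_eq_zero_iff {n : ℕ} (c : Fin n → ℂ) :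
    (∑ i, c i • X i : MvPolynomial (Fin n) ℂ) = 0 ↔ c = 0 := by
  constructor
  · intro h
    funext i
    have := congrArg (eval (Pi.single i 1 : Fin n → ℂ)) h
    rw [map_sum, map_zero] at this
    have hterm : ∀ j : Fin n, eval (Pi.single i 1 : Fin n → ℂ) (c j • X j) =
        if j = i then c j else 0 := by
      intro j
      rw [smul_eval, eval_X, Pi.single_apply]
      by_cases hji : j = i <;> simp [hji]
    rw [Finset.sum_congr rfl fun j _ => hterm j, Finset.sum_ite_eq' Finset.univ i,
      if_pos (Finset.mem_univ i)] at this
    simpa using this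
  · intro h
    rw [h]
    simp

lemma polar_zero_right {n : ℕ} (g : MvPolynomial (Fin n) ℂ) : polar g 0 = 0 := by
  unfold polar
  simp


/-- The hypersurface defined by a Macaulay inverse system `f` of
`A = S/I` has no points of multiplicity `≥ ℓ+1` iff `I_{ν-ℓ}` contains no nonzero
`(ν-ℓ)`-th power of a linear form, i.e. `I_{ν-ℓ} ∩ C_{ν-ℓ} = {0}`. -/
theorem no_multiplicity_iff_veronese {n ν ℓ : ℕ}
    (I : Ideal (MvPolynomial (Fin n) ℂ))
    (hIhom : ∀ g ∈ I, ∀ k : ℕ, (homogeneousComponent k g : MvPolynomial (Fin n) ℂ) ∈ I)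
    (hArt : IsArtinianRing (MvPolynomial (Fin n) ℂ ⧸ I))
    (f : MvPolynomial (Fin n) ℂ) (hf : f.IsHomogeneous ν)
    (hperp : ∀ g : MvPolynomial (Fin n) ℂ, polar g f = 0 ↔ g ∈ I)
    (hℓ : ℓ < ν) :
    (∀ p : Fin n → ℂ, p ≠ 0 →
        ∃ u : MvPolynomial (Fin n) ℂ, u.IsHomogeneous ℓ ∧ eval p (polar u f) ≠ 0) ↔
      (∀ c : Fin n → ℂ,
        (∑ i, c i • X i : MvPolynomial (Fin n) ℂ) ^ (ν - ℓ) ∈ I →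
        (∑ i, c i • X i : MvPolynomial (Fin n) ℂ) = 0) := by
  constructor
  · intro H c hc
    by_contra h0
    have hcne : c ≠ 0 := fun h => h0 ((linear_eq_zero_iff c).mpr h)
    obtain ⟨u, hu, hne⟩ := H c hcne
    apply hne
    have hpol : polar ((∑ i, c i • X i) ^ (ν - ℓ)) f = 0 := (hperp _).mpr hc
    have huf : (polar u f).IsHomogeneous (ν - ℓ) := polar_isHomogeneous hu hf
    have key := polar_linear_pow c (ν - ℓ) (polar u f) huf
    have hz : polar ((∑ i, c i • X i) ^ (ν - ℓ)) (polar u f) = 0 := by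
      rw [← polar_mul, mul_comm, polar_mul, hpol, polar_zero_right]
    rw [hz] at key
    have h2 : ((ν - ℓ).factorial : ℂ) * eval c (polar u f) = 0 :=
      MvPolynomial.C_injective (Fin n) ℂ (by rw [← key, map_zero])
    rcases mul_eq_zero.mp h2 with h3 | h3
    · exact absurd h3 (by exact_mod_cast (Nat.factorial_pos _).ne')
    · exact h3
  · intro H p hp
    by_contra hcon
    push_neg at hcon
    set L := (∑ i, p i • X i : MvPolynomial (Fin n) ℂ) with hL
    have hLhom : (L ^ (ν - ℓ)).IsHomogeneous (ν - ℓ) := by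
      have := (isHomogeneous_linear p).pow (ν - ℓ)
      rwa [one_mul] at this
    have hpf : (polar (L ^ (ν - ℓ)) f).IsHomogeneous ℓ := by
      have := polar_isHomogeneous hLhom hf
      rwa [show ν - (ν - ℓ) = ℓ by omega] at this
    have hzero : polar (L ^ (ν - ℓ)) f = 0 := by
      apply eq_zero_of_diffOp_eq_zero hpf
      intro s hsdeg
      have h1 : diffOp s (polar (L ^ (ν - ℓ)) f) =
          polar (monomial s 1) (polar (L ^ (ν - ℓ)) f) := by
        rw [polar_monomial, one_smul]
      rw [h1, ← polar_mul, mul_comm, polar_mul]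
      have hmon : (monomial s (1 : ℂ)).IsHomogeneous ℓ := isHomogeneous_monomial _ hsdeg
      have hms : (polar (monomial s 1) f).IsHomogeneous (ν - ℓ) := polar_isHomogeneous hmon hf
      rw [hL, polar_linear_pow p (ν - ℓ) _ hms, hcon _ hmon, mul_zero, map_zero]
    exact hp ((linear_eq_zero_iff p).mp (H p ((hperp _).mp hzero)))
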